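/- For n ≥ 2, G_1(n) = (2n-1)·G_1(n-1) + G_1(n-2), with G_1(0) = 1 and G_1(1) = 2. -/
import Mathlib

/-- `G₁ n = Σ_{i=0}^{n} (n+i)!/((n-i)!·i!·2^i)`. -/
def G1 (n : ℕ) : ℚ :=
  ∑ i ∈ Finset.range (n + 1),
    (Nat.factorial (n + i) : ℚ) /
      ((Nat.factorial (n - i) : ℚ) * (Nat.factorial i : ℚ) * 2 ^ i)

private def aa (n i : ℕ) : ℚ :=
  (Nat.factorial (n + i) : ℚ) /
      ((Nat.factorial (n - i) : ℚ) * (Nat.factorial i : ℚ) * 2 ^ i)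

private lemma G1_eq (n : ℕ) : G1 n = ∑ i ∈ Finset.range (n + 1), aa n i := rfl

private lemma fac_ne (x : ℕ) : ((Nat.factorial x : ℚ)) ≠ 0 := by
  exact_mod_cast (Nat.factorial_ne_zero x)

private lemma key (j d : ℕ) :
    aa (j+d+3) (j+1) = (2*(j+d+1)+3) * aa (j+d+2) j + aa (j+d+1) (j+1) := by
  unfold aa
  rw [show j+d+3-(j+1) = d+2 from by omega, show j+d+2-j = d+2 from by omega,
      show j+d+1-(j+1) = d from by omega,
      show j+d+3+(j+1) = (2*j+d+2)+1+1 from by omega,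
      show j+d+2+j = 2*j+d+2 from by omega,
      show j+d+1+(j+1) = 2*j+d+2 from by omega]
  rw [Nat.factorial_succ ((2*j+d+2)+1), Nat.factorial_succ (2*j+d+2),
      Nat.factorial_succ (d+1), Nat.factorial_succ d, Nat.factorial_succ j,
      pow_succ]
  have h1 := fac_ne (2*j+d+2)
  have h2 := fac_ne d
  have h3 := fac_ne j
  have h4 : (2:ℚ)^j ≠ 0 := pow_ne_zero _ two_ne_zero
  push_cast
  field_simp
  ring

private lemma edge1 (m : ℕ) : aa (m+2) (m+1) = (2*m+3) * aa (m+1) m := by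
  unfold aa
  rw [show m+2-(m+1) = 1 from by omega, show m+1-m = 1 from by omega,
      show m+2+(m+1) = (2*m+1)+1+1 from by omega,
      show m+1+m = 2*m+1 from by omega]
  rw [Nat.factorial_succ ((2*m+1)+1), Nat.factorial_succ (2*m+1),
      Nat.factorial_succ m, pow_succ]
  have h1 := fac_ne (2*m+1)
  have h3 := fac_ne m
  have h4 : (2:ℚ)^m ≠ 0 := pow_ne_zero _ two_ne_zero
  push_cast
  field_simp
  ring

private lemma edge2 (m : ℕ) : aa (m+2) (m+2) = (2*m+3) * aa (m+1) (m+1) := by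
  unfold aa
  rw [show m+2-(m+2) = 0 from by omega, show m+1-(m+1) = 0 from by omega,
      show m+2+(m+2) = (2*m+2)+1+1 from by omega,
      show m+1+(m+1) = (2*m+1)+1 from by omega]
  rw [Nat.factorial_succ ((2*m+2)+1), Nat.factorial_succ (2*m+2),
      Nat.factorial_succ (2*m+1),
      Nat.factorial_succ (m+1), Nat.factorial_succ m, pow_succ, pow_succ]
  have h1 := fac_ne (2*m+1)
  have h3 := fac_ne m
  have h4 : (2:ℚ)^m ≠ 0 := pow_ne_zero _ two_ne_zero
  push_cast
  field_simp
  ring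

private lemma a_zero (n : ℕ) : aa n 0 = 1 := by
  unfold aa
  simp only [Nat.add_zero, Nat.sub_zero, Nat.factorial_zero, Nat.cast_one, pow_zero, mul_one, one_mul]
  exact div_self (fac_ne n)

private lemma rec_lemma (m : ℕ) :
    G1 (m+2) = (2*(m:ℚ)+3) * G1 (m+1) + G1 m := by
  rw [G1_eq, G1_eq, G1_eq]
  rw [show m+2+1 = (m+2)+1 from rfl, Finset.sum_range_succ' (fun i => aa (m+2) i),
      Finset.sum_range_succ' (fun i => aa m i)]
  have hpt : ∀ j ∈ Finset.range (m+2),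
      aa (m+2) (j+1) = (2*(m:ℚ)+3) * aa (m+1) j + (if j < m then aa m (j+1) else 0) := by
    intro j hj
    rcases lt_trichotomy j m with h | h | h
    · obtain ⟨d, rfl⟩ : ∃ d, m = j + d + 1 := ⟨m - j - 1, by omega⟩
      rw [if_pos h]
      have := key j d
      rw [show j+d+1+2 = j+d+3 from by omega, show j+d+1+1 = j+d+2 from by omega]
      rw [this]; push_cast; ring
    · subst h
      rw [if_neg (lt_irrefl j), edge1]; ring
    · have hj' : j = m+1 := by simp at hj; omega
      subst hj'
      rw [if_neg (by omega)]
      rw [show m+1+1 = m+2 from rfl, edge2]; ring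
  rw [Finset.sum_congr rfl hpt, Finset.sum_add_distrib, ← Finset.mul_sum]
  have hif : ∑ j ∈ Finset.range (m+2), (if j < m then aa m (j+1) else 0)
      = ∑ j ∈ Finset.range m, aa m (j+1) := by
    rw [Finset.sum_range_succ, Finset.sum_range_succ, if_neg (by omega), if_neg (by omega)]
    rw [add_zero, add_zero]
    exact Finset.sum_congr rfl (fun j hj => if_pos (Finset.mem_range.mp hj))
  rw [hif, a_zero, a_zero]
  ring

theorem stmt_9 :
    G1 0 = 1 ∧ G1 1 = 2 ∧
      ∀ n : ℕ, 2 ≤ n → G1 n = (2 * n - 1) * G1 (n - 1) + G1 (n - 2) := by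
  refine ⟨?_, ?_, ?_⟩
  · simp [G1, Nat.factorial]
  · rw [G1_eq]
    rw [Finset.sum_range_succ, Finset.sum_range_succ, Finset.sum_range_zero]
    unfold aa
    norm_num [Nat.factorial]
  · intro n hn
    obtain ⟨m, rfl⟩ : ∃ m, n = m + 2 := ⟨n - 2, by omega⟩
    rw [show m+2-1 = m+1 from rfl, show m+2-2 = m from rfl, rec_lemma]
    push_cast
    ring
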